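/- Let R be a commutative ring and A a bialgebra over R. Then the shear map of A, the R-linear endomorphism of A ⊗[R] A determined by a ⊗ b ↦ Σ a₍₁₎ ⊗ a₍₂₎·b, is bijective if and only if the reversed shear map, the R-linear endomorphism determined by a ⊗ b ↦ Σ a·b₍₁₎ ⊗ b₍₂₎, is bijective. -/

import Mathlib

open TensorProduct

variable (R A : Type*) [CommRing R] [Ring A] [Bialgebra R A]

/-- The shear map of a bialgebra `A` over `R`: the `R`-linear endomorphism of `A ⊗[R] A`
determined by `a ⊗ b ↦ Σ a₍₁₎ ⊗ a₍₂₎·b`. -/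
noncomputable def shearMap : A ⊗[R] A →ₗ[R] A ⊗[R] A :=
  (LinearMap.mul' R A).lTensor A ∘ₗ (TensorProduct.assoc R A A A).toLinearMap ∘ₗ
    (Coalgebra.comul (R := R) (A := A)).rTensor A

/-- The reversed shear map of a bialgebra `A` over `R`: the `R`-linear endomorphism of
`A ⊗[R] A` determined by `a ⊗ b ↦ Σ a·b₍₁₎ ⊗ b₍₂₎`. -/
noncomputable def shearMap' : A ⊗[R] A →ₗ[R] A ⊗[R] A :=
  (LinearMap.mul' R A).rTensor A ∘ₗ (TensorProduct.assoc R A A A).symm.toLinearMap ∘ₗ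
    (Coalgebra.comul (R := R) (A := A)).lTensor A

namespace ShearAux

open Coalgebra LinearMap

variable {R A}
variable [CommRing R] [Ring A] [Bialgebra R A]

section Defs

variable (R A) [CommRing R] [Ring A] [Bialgebra R A]

/-- convolution product of two endomorphisms -/
noncomputable def conv (f g : A →ₗ[R] A) : A →ₗ[R] A :=
  LinearMap.mul' R A ∘ₗ TensorProduct.map f g ∘ₗ Coalgebra.comul

/-- the unit of the convolution algebra -/
noncomputable def uc : A →ₗ[R] A := Algebra.linearMap R A ∘ₗ Coalgebra.counit

noncomputable def Phi (f : A →ₗ[R] A) : A ⊗[R] A →ₗ[R] A ⊗[R] A :=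
  (LinearMap.mul' R A).lTensor A ∘ₗ (TensorProduct.assoc R A A A).toLinearMap ∘ₗ
    ((f.lTensor A ∘ₗ Coalgebra.comul (R := R)).rTensor A)

noncomputable def Psi (f : A →ₗ[R] A) : A ⊗[R] A →ₗ[R] A ⊗[R] A :=
  (LinearMap.mul' R A).rTensor A ∘ₗ (TensorProduct.assoc R A A A).symm.toLinearMap ∘ₗ
    ((f.rTensor A ∘ₗ Coalgebra.comul (R := R)).lTensor A)

/-- multiply middle into right: (a ⊗ b) ⊗ c ↦ a ⊗ bc -/
noncomputable def Mr : (A ⊗[R] A) ⊗[R] A →ₗ[R] A ⊗[R] A :=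
  (LinearMap.mul' R A).lTensor A ∘ₗ (TensorProduct.assoc R A A A).toLinearMap

/-- multiply middle into left: a ⊗ (b ⊗ c) ↦ ab ⊗ c -/
noncomputable def Ml : A ⊗[R] (A ⊗[R] A) →ₗ[R] A ⊗[R] A :=
  (LinearMap.mul' R A).rTensor A ∘ₗ (TensorProduct.assoc R A A A).symm.toLinearMap

/-- a ↦ a ⊗ 1 -/
noncomputable def i₁ : A →ₗ[R] A ⊗[R] A := (TensorProduct.mk R A A).flip 1

/-- a ↦ 1 ⊗ a -/
noncomputable def i₂ : A →ₗ[R] A ⊗[R] A := TensorProduct.mk R A A 1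

/-- x ⊗ y ↦ ε(x) • y -/
noncomputable def Ql : A ⊗[R] A →ₗ[R] A :=
  (TensorProduct.lid R A).toLinearMap ∘ₗ (Coalgebra.counit (R := R)).rTensor A

/-- x ⊗ y ↦ ε(y) • x -/
noncomputable def Qr : A ⊗[R] A →ₗ[R] A :=
  (TensorProduct.rid R A).toLinearMap ∘ₗ (Coalgebra.counit (R := R)).lTensor A

end Defs

@[simp] lemma Mr_tmul (a b c : A) : Mr R A ((a ⊗ₜ[R] b) ⊗ₜ[R] c) = a ⊗ₜ[R] (b * c) := by
  simp [Mr]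

@[simp] lemma Ml_tmul (a b c : A) : Ml R A (a ⊗ₜ[R] (b ⊗ₜ[R] c)) = (a * b) ⊗ₜ[R] c := by
  simp [Ml]

@[simp] lemma i₁_apply (a : A) : i₁ R A a = a ⊗ₜ[R] 1 := rfl

@[simp] lemma i₂_apply (a : A) : i₂ R A a = 1 ⊗ₜ[R] a := rfl

@[simp] lemma Ql_tmul (a b : A) : Ql R A (a ⊗ₜ[R] b) = counit (R := R) a • b := by
  simp [Ql]

@[simp] lemma Qr_tmul (a b : A) : Qr R A (a ⊗ₜ[R] b) = counit (R := R) b • a := by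
  simp [Qr]

lemma conv_apply (f g : A →ₗ[R] A) (a : A) (r : Coalgebra.Repr R a (A × A)) :
    conv R A f g a = ∑ i ∈ r.index, f (r.left i) * g (r.right i) := by
  simp only [conv, comp_apply, ← r.eq, map_sum, TensorProduct.map_tmul, mul'_apply]

lemma Phi_tmul (f : A →ₗ[R] A) (a b : A) (r : Coalgebra.Repr R a (A × A)) :
    Phi R A f (a ⊗ₜ[R] b) = ∑ i ∈ r.index, r.left i ⊗ₜ[R] (f (r.right i) * b) := by
  simp only [Phi, comp_apply, rTensor_tmul, LinearEquiv.coe_coe, ← r.eq, map_sum,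
    lTensor_tmul, TensorProduct.sum_tmul, assoc_tmul, mul'_apply]

lemma Psi_tmul (f : A →ₗ[R] A) (a b : A) (r : Coalgebra.Repr R b (A × A)) :
    Psi R A f (a ⊗ₜ[R] b) = ∑ i ∈ r.index, (a * f (r.left i)) ⊗ₜ[R] r.right i := by
  simp only [Psi, comp_apply, lTensor_tmul, LinearEquiv.coe_coe, ← r.eq, map_sum,
    rTensor_tmul, TensorProduct.tmul_sum, assoc_symm_tmul, mul'_apply]

lemma shearMap_tmul (a b : A) (r : Coalgebra.Repr R a (A × A)) :
    shearMap R A (a ⊗ₜ[R] b) = ∑ i ∈ r.index, r.left i ⊗ₜ[R] (r.right i * b) := by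
  simp only [shearMap, comp_apply, rTensor_tmul, LinearEquiv.coe_coe, ← r.eq, map_sum,
    TensorProduct.sum_tmul, assoc_tmul, lTensor_tmul, mul'_apply]

lemma shearMap'_tmul (a b : A) (r : Coalgebra.Repr R b (A × A)) :
    shearMap' R A (a ⊗ₜ[R] b) = ∑ i ∈ r.index, (a * r.left i) ⊗ₜ[R] r.right i := by
  simp only [shearMap', comp_apply, lTensor_tmul, LinearEquiv.coe_coe, ← r.eq, map_sum,
    TensorProduct.tmul_sum, assoc_symm_tmul, rTensor_tmul, mul'_apply]

lemma Phi_id : Phi R A LinearMap.id = shearMap R A := by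
  simp [Phi, shearMap]

lemma Psi_id : Psi R A LinearMap.id = shearMap' R A := by
  simp [Psi, shearMap']
set_option linter.unusedSectionVars false

lemma ext_threefold'' {M N P Q : Type*} [AddCommMonoid M] [AddCommMonoid N] [AddCommMonoid P]
    [AddCommMonoid Q] [Module R M] [Module R N] [Module R P] [Module R Q]
    {f g : M ⊗[R] (N ⊗[R] P) →ₗ[R] Q}
    (h : ∀ m n p, f (m ⊗ₜ (n ⊗ₜ p)) = g (m ⊗ₜ (n ⊗ₜ p))) : f = g := by
  rw [← LinearMap.cancel_right
    (LinearEquiv.surjective (TensorProduct.assoc R M N P) : Function.Surjective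
      (TensorProduct.assoc R M N P).toLinearMap)]
  exact TensorProduct.ext_threefold fun m n p => by simpa using h m n p

lemma sum_counit_smul_left {a : A} (r : Coalgebra.Repr R a (A × A)) :
    ∑ i ∈ r.index, counit (R := R) (r.right i) • r.left i = a := by
  have h := Coalgebra.sum_tmul_counit_eq (R := R) r
  apply_fun (TensorProduct.rid R A) at h
  rw [map_sum] at h
  simp only [TensorProduct.rid_tmul, one_smul] at h
  exact h

lemma sum_counit_smul_right {a : A} (r : Coalgebra.Repr R a (A × A)) :
    ∑ i ∈ r.index, counit (R := R) (r.left i) • r.right i = a := by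
  have h := Coalgebra.sum_counit_tmul_eq (R := R) r
  apply_fun (TensorProduct.lid R A) at h
  rw [map_sum] at h
  simp only [TensorProduct.lid_tmul, one_smul] at h
  exact h

lemma sum_smul_tmul (b : A) {a : A} (r : Coalgebra.Repr R a (A × A)) :
    ∑ i ∈ r.index, counit (R := R) (r.right i) • (r.left i ⊗ₜ[R] b) = a ⊗ₜ[R] b := by
  have h := congrArg (· ⊗ₜ[R] b) (sum_counit_smul_left r)
  simpa [TensorProduct.sum_tmul, TensorProduct.smul_tmul'] using h

lemma sum_smul_tmul' (b : A) {a : A} (r : Coalgebra.Repr R a (A × A)) :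
    ∑ i ∈ r.index, counit (R := R) (r.left i) • (b ⊗ₜ[R] r.right i) = b ⊗ₜ[R] a := by
  have h := congrArg (b ⊗ₜ[R] ·) (sum_counit_smul_right r)
  simpa [TensorProduct.tmul_sum, TensorProduct.tmul_smul] using h

lemma sum_smul_mul (b : A) {a : A} (r : Coalgebra.Repr R a (A × A)) :
    ∑ i ∈ r.index, counit (R := R) (r.left i) • (r.right i * b) = a * b := by
  have h := congrArg (· * b) (sum_counit_smul_right r)
  simpa [Finset.sum_mul, smul_mul_assoc] using h

lemma sum_smul_mul' (b : A) {a : A} (r : Coalgebra.Repr R a (A × A)) :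
    ∑ i ∈ r.index, counit (R := R) (r.right i) • (b * r.left i) = b * a := by
  have h := congrArg (b * ·) (sum_counit_smul_left r)
  simpa [Finset.mul_sum, mul_smul_comm] using h

lemma Phi_uc : Phi R A (uc R A) = LinearMap.id := by
  apply TensorProduct.ext'
  intro a b
  rw [Phi_tmul (uc R A) a b (ℛ R a)]
  simp only [uc, comp_apply, Algebra.linearMap_apply, ← Algebra.smul_def]
  simpa using sum_smul_tmul b (ℛ R a)

lemma Psi_uc : Psi R A (uc R A) = LinearMap.id := by
  apply TensorProduct.ext'
  intro a b
  rw [Psi_tmul (uc R A) a b (ℛ R b)]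
  have : ∀ x : A, a * uc R A x = counit (R := R) x • a := by
    intro x
    simp [uc, ← Algebra.commutes, ← Algebra.smul_def]
  simp only [this]
  simpa [TensorProduct.smul_tmul'] using sum_smul_tmul' a (ℛ R b)

lemma Ql_shear : Ql R A ∘ₗ shearMap R A = LinearMap.mul' R A := by
  apply TensorProduct.ext'
  intro a b
  rw [comp_apply, shearMap_tmul a b (ℛ R a), map_sum]
  simpa using sum_smul_mul b (ℛ R a)

lemma Qr_shear' : Qr R A ∘ₗ shearMap' R A = LinearMap.mul' R A := by
  apply TensorProduct.ext'
  intro a b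
  rw [comp_apply, shearMap'_tmul a b (ℛ R b), map_sum]
  simpa using sum_smul_mul' a (ℛ R b)

lemma shear_i₁ : shearMap R A ∘ₗ i₁ R A = Coalgebra.comul := by
  apply LinearMap.ext
  intro a
  rw [comp_apply, i₁_apply, shearMap_tmul a 1 (ℛ R a)]
  simpa using (ℛ R a).eq

lemma shear'_i₂ : shearMap' R A ∘ₗ i₂ R A = Coalgebra.comul := by
  apply LinearMap.ext
  intro a
  rw [comp_apply, i₂_apply, shearMap'_tmul 1 a (ℛ R a)]
  simpa using (ℛ R a).eq

lemma Mr_rTensor_shear : Mr R A ∘ₗ (shearMap R A).rTensor A = shearMap R A ∘ₗ Mr R A := by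
  apply TensorProduct.ext_threefold
  intro a b c
  rw [comp_apply, comp_apply, rTensor_tmul, Mr_tmul, shearMap_tmul a b (ℛ R a),
    shearMap_tmul a (b * c) (ℛ R a), TensorProduct.sum_tmul, map_sum]
  simp [mul_assoc]

lemma Ml_lTensor_shear' : Ml R A ∘ₗ (shearMap' R A).lTensor A = shearMap' R A ∘ₗ Ml R A := by
  apply ext_threefold''
  intro a b c
  rw [comp_apply, comp_apply, lTensor_tmul, Ml_tmul, shearMap'_tmul b c (ℛ R c),
    shearMap'_tmul (a * b) c (ℛ R c), TensorProduct.tmul_sum, map_sum]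
  simp [mul_assoc]

lemma Mr_i₁ : Mr R A ∘ₗ (i₁ R A).rTensor A = LinearMap.id := by
  apply TensorProduct.ext'
  intro a b
  simp

lemma Ml_i₂ : Ml R A ∘ₗ (i₂ R A).lTensor A = LinearMap.id := by
  apply TensorProduct.ext'
  intro a b
  simp

lemma Ql_Mr : Ql R A ∘ₗ Mr R A = LinearMap.mul' R A ∘ₗ (Ql R A).rTensor A := by
  apply TensorProduct.ext_threefold
  intro a b c
  simp [smul_mul_assoc]

lemma Qr_Ml : Qr R A ∘ₗ Ml R A = LinearMap.mul' R A ∘ₗ (Qr R A).lTensor A := by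
  apply ext_threefold''
  intro a b c
  simp [mul_smul_comm]

lemma lQl_D : (Ql R A).lTensor A ∘ₗ (TensorProduct.assoc R A A A).toLinearMap ∘ₗ
    (Coalgebra.comul (R := R) (A := A)).rTensor A = LinearMap.id := by
  apply TensorProduct.ext'
  intro a b
  simp only [comp_apply, rTensor_tmul, LinearEquiv.coe_coe, id_coe, id_eq]
  rw [← (ℛ R a).eq, TensorProduct.sum_tmul, map_sum, map_sum]
  simp only [assoc_tmul, lTensor_tmul, Ql_tmul, TensorProduct.tmul_smul]
  simpa using sum_smul_tmul b (ℛ R a)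

lemma rQr_D' : (Qr R A).rTensor A ∘ₗ (TensorProduct.assoc R A A A).symm.toLinearMap ∘ₗ
    (Coalgebra.comul (R := R) (A := A)).lTensor A = LinearMap.id := by
  apply TensorProduct.ext'
  intro a b
  simp only [comp_apply, lTensor_tmul, LinearEquiv.coe_coe, id_coe, id_eq]
  rw [← (ℛ R b).eq, TensorProduct.tmul_sum, map_sum, map_sum]
  simp only [assoc_symm_tmul, rTensor_tmul, Qr_tmul, ← TensorProduct.smul_tmul']
  simpa using sum_smul_tmul' a (ℛ R b)

lemma D_i₁ : (TensorProduct.assoc R A A A).toLinearMap ∘ₗ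
      (Coalgebra.comul (R := R) (A := A)).rTensor A ∘ₗ i₁ R A =
    (i₁ R A).lTensor A ∘ₗ Coalgebra.comul := by
  apply LinearMap.ext
  intro a
  simp only [comp_apply, i₁_apply, rTensor_tmul, LinearEquiv.coe_coe]
  rw [← (ℛ R a).eq]
  simp [TensorProduct.sum_tmul]

lemma D'_i₂ : (TensorProduct.assoc R A A A).symm.toLinearMap ∘ₗ
      (Coalgebra.comul (R := R) (A := A)).lTensor A ∘ₗ i₂ R A =
    (i₂ R A).rTensor A ∘ₗ Coalgebra.comul := by
  apply LinearMap.ext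
  intro a
  simp only [comp_apply, i₂_apply, lTensor_tmul, LinearEquiv.coe_coe]
  rw [← (ℛ R a).eq]
  simp [TensorProduct.tmul_sum]

lemma Phi_comp (f g : A →ₗ[R] A) : Phi R A f ∘ₗ Phi R A g = Phi R A (conv R A f g) := by
  apply TensorProduct.ext'
  intro a b
  set r := ℛ R a with hr
  set r₁ : (i : r.ι) → Coalgebra.Repr R (r.left i) (A × A) := fun i => ℛ R (r.left i) with hr₁
  set r₂ : (i : r.ι) → Coalgebra.Repr R (r.right i) (A × A) := fun i => ℛ R (r.right i) with hr₂
  have key := Coalgebra.sum_tmul_tmul_eq r r₁ r₂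
  apply_fun LinearMap.lTensor A
    (LinearMap.mul' R A ∘ₗ TensorProduct.map f (LinearMap.mulRight R b ∘ₗ g)) at key
  simp only [map_sum, lTensor_tmul, comp_apply, TensorProduct.map_tmul, mul'_apply,
    mulRight_apply] at key
  have hrhs : ∀ i, r.left i ⊗ₜ[R] (conv R A f g (r.right i) * b) =
      ∑ j ∈ (r₂ i).index, r.left i ⊗ₜ[R] (f ((r₂ i).left j) * (g ((r₂ i).right j) * b)) := by
    intro i
    rw [conv_apply f g (r.right i) (r₂ i), Finset.sum_mul, TensorProduct.tmul_sum]
    simp [mul_assoc]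
  rw [comp_apply, Phi_tmul g a b r, map_sum, Phi_tmul (conv R A f g) a b r,
    Finset.sum_congr rfl fun i _ => Phi_tmul f (r.left i) (g (r.right i) * b) (r₁ i),
    Finset.sum_congr rfl fun i _ => hrhs i]
  exact key

lemma Psi_comp (f g : A →ₗ[R] A) : Psi R A f ∘ₗ Psi R A g = Psi R A (conv R A g f) := by
  apply TensorProduct.ext'
  intro a b
  set s := ℛ R b with hs
  set s₁ : (i : s.ι) → Coalgebra.Repr R (s.left i) (A × A) := fun i => ℛ R (s.left i) with hs₁
  set s₂ : (i : s.ι) → Coalgebra.Repr R (s.right i) (A × A) := fun i => ℛ R (s.right i) with hs₂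
  have key := Coalgebra.sum_tmul_tmul_eq s s₁ s₂
  apply_fun (TensorProduct.map
      (LinearMap.mulLeft R a ∘ₗ LinearMap.mul' R A ∘ₗ TensorProduct.map g f) LinearMap.id) ∘ₗ
      (TensorProduct.assoc R A A A).symm.toLinearMap at key
  simp only [map_sum, comp_apply, LinearEquiv.coe_coe, assoc_symm_tmul, TensorProduct.map_tmul,
    mul'_apply, mulLeft_apply, id_coe, id_eq] at key
  have hrhs : ∀ i, (a * conv R A g f (s.left i)) ⊗ₜ[R] s.right i =
      ∑ j ∈ (s₁ i).index, (a * (g ((s₁ i).left j) * f ((s₁ i).right j))) ⊗ₜ[R] s.right i := by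
    intro i
    rw [conv_apply g f (s.left i) (s₁ i), Finset.mul_sum, TensorProduct.sum_tmul]
  rw [comp_apply, Psi_tmul g a b s, map_sum, Psi_tmul (conv R A g f) a b s,
    Finset.sum_congr rfl fun i _ => Psi_tmul f (a * g (s.left i)) (s.right i) (s₂ i),
    Finset.sum_congr rfl fun i _ => hrhs i]
  simpa only [mul_assoc] using key.symm

lemma colinear : (TensorProduct.assoc R A A A).toLinearMap ∘ₗ
      (Coalgebra.comul (R := R) (A := A)).rTensor A ∘ₗ shearMap R A =
    (shearMap R A).lTensor A ∘ₗ (TensorProduct.assoc R A A A).toLinearMap ∘ₗ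
      (Coalgebra.comul (R := R) (A := A)).rTensor A := by
  apply TensorProduct.ext'
  intro a b
  set r := ℛ R a with hr
  set r₁ : (i : r.ι) → Coalgebra.Repr R (r.left i) (A × A) := fun i => ℛ R (r.left i) with hr₁
  set r₂ : (i : r.ι) → Coalgebra.Repr R (r.right i) (A × A) := fun i => ℛ R (r.right i) with hr₂
  have key := Coalgebra.sum_tmul_tmul_eq r r₁ r₂
  apply_fun LinearMap.lTensor A (LinearMap.lTensor A (LinearMap.mulRight R b)) at key
  simp only [map_sum, lTensor_tmul, mulRight_apply] at key
  simp only [comp_apply, LinearEquiv.coe_coe]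
  trans (∑ i ∈ r.index, ∑ j ∈ (r₁ i).index,
    (r₁ i).left j ⊗ₜ[R] ((r₁ i).right j ⊗ₜ[R] (r.right i * b)))
  · rw [shearMap_tmul a b r, map_sum, map_sum,
      Finset.sum_congr rfl fun i _ => ?_]
    rw [rTensor_tmul, ← (r₁ i).eq, TensorProduct.sum_tmul, map_sum]
    simp
  · rw [key, rTensor_tmul, ← r.eq, TensorProduct.sum_tmul, map_sum, map_sum,
      Finset.sum_congr rfl fun i _ => ?_]
    rw [assoc_tmul, lTensor_tmul, shearMap_tmul (r.right i) b (r₂ i),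
      TensorProduct.tmul_sum]

lemma colinear' : (TensorProduct.assoc R A A A).symm.toLinearMap ∘ₗ
      (Coalgebra.comul (R := R) (A := A)).lTensor A ∘ₗ shearMap' R A =
    (shearMap' R A).rTensor A ∘ₗ (TensorProduct.assoc R A A A).symm.toLinearMap ∘ₗ
      (Coalgebra.comul (R := R) (A := A)).lTensor A := by
  apply TensorProduct.ext'
  intro a b
  set s := ℛ R b with hs
  set s₁ : (i : s.ι) → Coalgebra.Repr R (s.left i) (A × A) := fun i => ℛ R (s.left i) with hs₁
  set s₂ : (i : s.ι) → Coalgebra.Repr R (s.right i) (A × A) := fun i => ℛ R (s.right i) with hs₂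
  have key := Coalgebra.sum_tmul_tmul_eq s s₁ s₂
  apply_fun (TensorProduct.map (TensorProduct.map (LinearMap.mulLeft R a) LinearMap.id)
      LinearMap.id) ∘ₗ (TensorProduct.assoc R A A A).symm.toLinearMap at key
  simp only [map_sum, comp_apply, LinearEquiv.coe_coe, assoc_symm_tmul, TensorProduct.map_tmul,
    mulLeft_apply, id_coe, id_eq] at key
  simp only [comp_apply, LinearEquiv.coe_coe]
  trans (∑ i ∈ s.index, ∑ j ∈ (s₂ i).index,
    ((a * s.left i) ⊗ₜ[R] (s₂ i).left j) ⊗ₜ[R] (s₂ i).right j)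
  · rw [shearMap'_tmul a b s, map_sum, map_sum,
      Finset.sum_congr rfl fun i _ => ?_]
    rw [lTensor_tmul, ← (s₂ i).eq, TensorProduct.tmul_sum, map_sum]
    simp
  · rw [← key, lTensor_tmul, ← s.eq, TensorProduct.tmul_sum, map_sum, map_sum,
      Finset.sum_congr rfl fun i _ => ?_]
    rw [assoc_symm_tmul, rTensor_tmul, shearMap'_tmul a (s.left i) (s₁ i),
      TensorProduct.sum_tmul]


lemma Ql_i₁ : Ql R A ∘ₗ i₁ R A = uc R A := by
  apply LinearMap.ext
  intro a
  simp [uc, Algebra.algebraMap_eq_smul_one]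

lemma Qr_i₂ : Qr R A ∘ₗ i₂ R A = uc R A := by
  apply LinearMap.ext
  intro a
  simp [uc, Algebra.algebraMap_eq_smul_one]

lemma exists_conv_inv_of_shear (h : Function.Bijective (shearMap R A)) :
    ∃ S : A →ₗ[R] A,
      conv R A S LinearMap.id = uc R A ∧ conv R A LinearMap.id S = uc R A := by
  classical
  let e := LinearEquiv.ofBijective (shearMap R A) h
  let γ : A ⊗[R] A →ₗ[R] A ⊗[R] A := e.symm.toLinearMap
  have hβγ : ∀ x, shearMap R A (γ x) = x := fun x => by
    simpa [γ, e, LinearEquiv.ofBijective_apply] using e.apply_symm_apply x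
  have hγβ : ∀ x, γ (shearMap R A x) = x := fun x => by
    simpa [γ, e, LinearEquiv.ofBijective_apply] using e.symm_apply_apply x
  set S : A →ₗ[R] A := Ql R A ∘ₗ γ ∘ₗ i₁ R A with hS
  -- γ commutes with Mr
  have hMr : ∀ x, γ (Mr R A x) = Mr R A ((γ.rTensor A) x) := by
    intro x
    apply h.injective
    rw [hβγ]
    have h1 := LinearMap.congr_fun (Mr_rTensor_shear (R := R) (A := A)) ((γ.rTensor A) x)
    simp only [LinearMap.comp_apply] at h1
    rw [← h1, ← LinearMap.comp_apply ((shearMap R A).rTensor A), ← LinearMap.rTensor_comp,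
      show shearMap R A ∘ₗ γ = LinearMap.id from LinearMap.ext hβγ, LinearMap.rTensor_id,
      LinearMap.id_apply]
  -- γ is determined by its values on a ⊗ 1
  have hγ_eq : ∀ x, γ x = Mr R A (((γ ∘ₗ i₁ R A).rTensor A) x) := by
    intro x
    conv_lhs => rw [show x = Mr R A (((i₁ R A).rTensor A) x) from
      (LinearMap.congr_fun (Mr_i₁ (R := R) (A := A)) x).symm]
    rw [hMr, ← LinearMap.comp_apply (γ.rTensor A), ← LinearMap.rTensor_comp]
  -- γ is colinear
  have hcolin : ∀ x, (TensorProduct.assoc R A A A)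
      (((Coalgebra.comul (R := R) (A := A)).rTensor A) (γ x)) =
      (γ.lTensor A) ((TensorProduct.assoc R A A A)
        (((Coalgebra.comul (R := R) (A := A)).rTensor A) x)) := by
    intro x
    have h1 : ∀ y : A ⊗[R] (A ⊗[R] A), (γ.lTensor A) (((shearMap R A).lTensor A) y) = y := by
      intro y
      rw [← LinearMap.comp_apply, ← LinearMap.lTensor_comp,
        show γ ∘ₗ shearMap R A = LinearMap.id from LinearMap.ext hγβ, LinearMap.lTensor_id]
      rfl
    conv_lhs => rw [← h1 ((TensorProduct.assoc R A A A)
      (((Coalgebra.comul (R := R) (A := A)).rTensor A) (γ x)))]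
    congr 1
    have h2 := LinearMap.congr_fun (colinear (R := R) (A := A)) (γ x)
    simp only [LinearMap.comp_apply, LinearEquiv.coe_coe] at h2
    rw [← h2, hβγ]
  -- γ on a ⊗ 1 is Σ a₁ ⊗ S a₂
  have hN : ∀ a : A, γ (a ⊗ₜ[R] 1) = (S.lTensor A) (Coalgebra.comul a) := by
    intro a
    have h3 := LinearMap.congr_fun (lQl_D (R := R) (A := A)) (γ (a ⊗ₜ[R] 1))
    simp only [LinearMap.comp_apply, LinearEquiv.coe_coe, LinearMap.id_apply] at h3
    rw [← h3, hcolin]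
    have h4 := LinearMap.congr_fun (D_i₁ (R := R) (A := A)) a
    simp only [LinearMap.comp_apply, LinearEquiv.coe_coe, i₁_apply] at h4
    rw [h4, ← LinearMap.comp_apply (γ.lTensor A), ← LinearMap.lTensor_comp,
      ← LinearMap.comp_apply ((Ql R A).lTensor A), ← LinearMap.lTensor_comp]
  have hμγ : ∀ x, LinearMap.mul' R A (γ x) = Ql R A x := by
    intro x
    have h5 := LinearMap.congr_fun (Ql_shear (R := R) (A := A)) (γ x)
    simp only [LinearMap.comp_apply] at h5
    rw [← h5, hβγ]
  have hγΔ : ∀ a : A, γ (Coalgebra.comul a) = a ⊗ₜ[R] 1 := by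
    intro a
    have h6 := LinearMap.congr_fun (shear_i₁ (R := R) (A := A)) a
    simp only [LinearMap.comp_apply, i₁_apply] at h6
    rw [← h6, hγβ]
  have hQlγ : ∀ x, Ql R A (γ x) = LinearMap.mul' R A ((S.rTensor A) x) := by
    intro x
    rw [hγ_eq x]
    have h7 := LinearMap.congr_fun (Ql_Mr (R := R) (A := A)) (((γ ∘ₗ i₁ R A).rTensor A) x)
    simp only [LinearMap.comp_apply] at h7
    rw [h7, ← LinearMap.comp_apply ((Ql R A).rTensor A), ← LinearMap.rTensor_comp]
  refine ⟨S, ?_, ?_⟩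
  · apply LinearMap.ext
    intro a
    have : conv R A S LinearMap.id a = LinearMap.mul' R A ((S.rTensor A) (Coalgebra.comul a)) :=
      rfl
    rw [this, ← hQlγ, hγΔ]
    exact LinearMap.congr_fun (Ql_i₁ (R := R) (A := A)) a
  · apply LinearMap.ext
    intro a
    have : conv R A LinearMap.id S a =
        LinearMap.mul' R A ((S.lTensor A) (Coalgebra.comul a)) := rfl
    rw [this, ← hN, hμγ]
    exact LinearMap.congr_fun (Ql_i₁ (R := R) (A := A)) a


lemma exists_conv_inv_of_shear' (h : Function.Bijective (shearMap' R A)) :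
    ∃ S : A →ₗ[R] A,
      conv R A S LinearMap.id = uc R A ∧ conv R A LinearMap.id S = uc R A := by
  classical
  let e := LinearEquiv.ofBijective (shearMap' R A) h
  let γ : A ⊗[R] A →ₗ[R] A ⊗[R] A := e.symm.toLinearMap
  have hβγ : ∀ x, shearMap' R A (γ x) = x := fun x => by
    simpa [γ, e, LinearEquiv.ofBijective_apply] using e.apply_symm_apply x
  have hγβ : ∀ x, γ (shearMap' R A x) = x := fun x => by
    simpa [γ, e, LinearEquiv.ofBijective_apply] using e.symm_apply_apply x
  set S : A →ₗ[R] A := Qr R A ∘ₗ γ ∘ₗ i₂ R A with hS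
  have hMl : ∀ x, γ (Ml R A x) = Ml R A ((γ.lTensor A) x) := by
    intro x
    apply h.injective
    rw [hβγ]
    have h1 := LinearMap.congr_fun (Ml_lTensor_shear' (R := R) (A := A)) ((γ.lTensor A) x)
    simp only [LinearMap.comp_apply] at h1
    rw [← h1, ← LinearMap.comp_apply ((shearMap' R A).lTensor A), ← LinearMap.lTensor_comp,
      show shearMap' R A ∘ₗ γ = LinearMap.id from LinearMap.ext hβγ, LinearMap.lTensor_id,
      LinearMap.id_apply]
  have hγ_eq : ∀ x, γ x = Ml R A (((γ ∘ₗ i₂ R A).lTensor A) x) := by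
    intro x
    conv_lhs => rw [show x = Ml R A (((i₂ R A).lTensor A) x) from
      (LinearMap.congr_fun (Ml_i₂ (R := R) (A := A)) x).symm]
    rw [hMl, ← LinearMap.comp_apply (γ.lTensor A), ← LinearMap.lTensor_comp]
  have hcolin : ∀ x, (TensorProduct.assoc R A A A).symm
      (((Coalgebra.comul (R := R) (A := A)).lTensor A) (γ x)) =
      (γ.rTensor A) ((TensorProduct.assoc R A A A).symm
        (((Coalgebra.comul (R := R) (A := A)).lTensor A) x)) := by
    intro x
    have h1 : ∀ y : (A ⊗[R] A) ⊗[R] A, (γ.rTensor A) (((shearMap' R A).rTensor A) y) = y := by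
      intro y
      rw [← LinearMap.comp_apply, ← LinearMap.rTensor_comp,
        show γ ∘ₗ shearMap' R A = LinearMap.id from LinearMap.ext hγβ, LinearMap.rTensor_id]
      rfl
    conv_lhs => rw [← h1 ((TensorProduct.assoc R A A A).symm
      (((Coalgebra.comul (R := R) (A := A)).lTensor A) (γ x)))]
    congr 1
    have h2 := LinearMap.congr_fun (colinear' (R := R) (A := A)) (γ x)
    simp only [LinearMap.comp_apply, LinearEquiv.coe_coe] at h2
    rw [← h2, hβγ]
  have hN : ∀ a : A, γ ((1 : A) ⊗ₜ[R] a) = (S.rTensor A) (Coalgebra.comul a) := by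
    intro a
    have h3 := LinearMap.congr_fun (rQr_D' (R := R) (A := A)) (γ ((1 : A) ⊗ₜ[R] a))
    simp only [LinearMap.comp_apply, LinearEquiv.coe_coe, LinearMap.id_apply] at h3
    rw [← h3, hcolin]
    have h4 := LinearMap.congr_fun (D'_i₂ (R := R) (A := A)) a
    simp only [LinearMap.comp_apply, LinearEquiv.coe_coe, i₂_apply] at h4
    rw [h4, ← LinearMap.comp_apply (γ.rTensor A), ← LinearMap.rTensor_comp,
      ← LinearMap.comp_apply ((Qr R A).rTensor A), ← LinearMap.rTensor_comp]
  have hμγ : ∀ x, LinearMap.mul' R A (γ x) = Qr R A x := by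
    intro x
    have h5 := LinearMap.congr_fun (Qr_shear' (R := R) (A := A)) (γ x)
    simp only [LinearMap.comp_apply] at h5
    rw [← h5, hβγ]
  have hγΔ : ∀ a : A, γ (Coalgebra.comul a) = (1 : A) ⊗ₜ[R] a := by
    intro a
    have h6 := LinearMap.congr_fun (shear'_i₂ (R := R) (A := A)) a
    simp only [LinearMap.comp_apply, i₂_apply] at h6
    rw [← h6, hγβ]
  have hQrγ : ∀ x, Qr R A (γ x) = LinearMap.mul' R A ((S.lTensor A) x) := by
    intro x
    rw [hγ_eq x]
    have h7 := LinearMap.congr_fun (Qr_Ml (R := R) (A := A)) (((γ ∘ₗ i₂ R A).lTensor A) x)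
    simp only [LinearMap.comp_apply] at h7
    rw [h7, ← LinearMap.comp_apply ((Qr R A).lTensor A), ← LinearMap.lTensor_comp]
  refine ⟨S, ?_, ?_⟩
  · apply LinearMap.ext
    intro a
    have : conv R A S LinearMap.id a = LinearMap.mul' R A ((S.rTensor A) (Coalgebra.comul a)) :=
      rfl
    rw [this, ← hN, hμγ]
    exact LinearMap.congr_fun (Qr_i₂ (R := R) (A := A)) a
  · apply LinearMap.ext
    intro a
    have : conv R A LinearMap.id S a =
        LinearMap.mul' R A ((S.lTensor A) (Coalgebra.comul a)) := rfl
    rw [this, ← hQrγ, hγΔ]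
    exact LinearMap.congr_fun (Qr_i₂ (R := R) (A := A)) a

lemma bijective_shear_of_conv {S : A →ₗ[R] A} (h1 : conv R A S LinearMap.id = uc R A)
    (h2 : conv R A LinearMap.id S = uc R A) : Function.Bijective (shearMap R A) := by
  have hl : Phi R A S ∘ₗ shearMap R A = LinearMap.id := by
    rw [← Phi_id, Phi_comp, h1, Phi_uc]
  have hr : shearMap R A ∘ₗ Phi R A S = LinearMap.id := by
    rw [← Phi_id, Phi_comp, h2, Phi_uc]
  exact Function.bijective_iff_has_inverse.mpr ⟨Phi R A S,
    fun x => by simpa using LinearMap.congr_fun hl x,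
    fun x => by simpa using LinearMap.congr_fun hr x⟩

lemma bijective_shear'_of_conv {S : A →ₗ[R] A} (h1 : conv R A S LinearMap.id = uc R A)
    (h2 : conv R A LinearMap.id S = uc R A) : Function.Bijective (shearMap' R A) := by
  have hl : Psi R A S ∘ₗ shearMap' R A = LinearMap.id := by
    rw [← Psi_id, Psi_comp, h2, Psi_uc]
  have hr : shearMap' R A ∘ₗ Psi R A S = LinearMap.id := by
    rw [← Psi_id, Psi_comp, h1, Psi_uc]
  exact Function.bijective_iff_has_inverse.mpr ⟨Psi R A S,
    fun x => by simpa using LinearMap.congr_fun hl x,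
    fun x => by simpa using LinearMap.congr_fun hr x⟩

end ShearAux

/-- For a bialgebra `A` over a commutative ring `R`, the shear map
`a ⊗ b ↦ Σ a₍₁₎ ⊗ a₍₂₎·b` is bijective if and only if the reversed shear map
`a ⊗ b ↦ Σ a·b₍₁₎ ⊗ b₍₂₎` is bijective. -/


theorem bijective_shearMap_iff_bijective_shearMap' :
    Function.Bijective (shearMap R A) ↔ Function.Bijective (shearMap' R A) := by
  constructor
  · intro h
    obtain ⟨S, h1, h2⟩ := ShearAux.exists_conv_inv_of_shear h
    exact ShearAux.bijective_shear'_of_conv h1 h2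
  · intro h
    obtain ⟨S, h1, h2⟩ := ShearAux.exists_conv_inv_of_shear' h
    exact ShearAux.bijective_shear_of_conv h1 h2
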